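/- arXiv:2110.02936 — 5 statements merged into one kernel-verified Lean document; each statement's English description precedes it below -/
import Mathlib

section
/- Let R be a commutative ring, I an ideal of R, and A an element of SL₂(R) lying in the kernel of the group homomorphism SL₂(R) → SL₂(R/I) induced by the quotient ring homomorphism R → R/I. Then tr(A) − 2 lies in the ideal I². -/
/-- If `A ∈ SL₂(R)` lies in the kernel of the entrywise map
`SL₂(R) → SL₂(R/I)`, then `tr A - 2 ∈ I²`. -/
theorem stmt_0 (R : Type*) [CommRing R] (I : Ideal R)
    (A : Matrix.SpecialLinearGroup (Fin 2) R)
    (hA : A ∈ (Matrix.SpecialLinearGroup.map (Ideal.Quotient.mk I)).ker) :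
    Matrix.trace (A : Matrix (Fin 2) (Fin 2) R) - 2 ∈ I * I := by
  rw [MonoidHom.mem_ker] at hA
  have h : ∀ i j, Ideal.Quotient.mk I ((A : Matrix (Fin 2) (Fin 2) R) i j)
      = (1 : Matrix (Fin 2) (Fin 2) (R ⧸ I)) i j := by
    intro i j
    have := congrArg (fun M : Matrix.SpecialLinearGroup (Fin 2) (R ⧸ I) =>
      (M : Matrix (Fin 2) (Fin 2) (R ⧸ I)) i j) hA
    simpa [Matrix.SpecialLinearGroup.map_apply_coe] using this
  have mem : ∀ i j, ((A : Matrix (Fin 2) (Fin 2) R) i j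
      - (1 : Matrix (Fin 2) (Fin 2) R) i j) ∈ I := by
    intro i j
    rw [← Ideal.Quotient.eq_zero_iff_mem, map_sub, h i j]
    simp [Matrix.one_apply]
  have hdet : ((A : Matrix (Fin 2) (Fin 2) R)).det = 1 := A.2
  rw [Matrix.det_fin_two] at hdet
  have h01 := mem 0 1
  have h10 := mem 1 0
  have h00 := mem 0 0
  have h11 := mem 1 1
  simp [Matrix.one_apply] at h01 h10 h00 h11
  have key : Matrix.trace (A : Matrix (Fin 2) (Fin 2) R) - 2
      = (A : Matrix (Fin 2) (Fin 2) R) 0 1 * (A : Matrix (Fin 2) (Fin 2) R) 1 0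
        - ((A : Matrix (Fin 2) (Fin 2) R) 0 0 - 1)
          * ((A : Matrix (Fin 2) (Fin 2) R) 1 1 - 1) := by
    rw [Matrix.trace_fin_two]
    linear_combination hdet
  rw [key]
  exact Ideal.sub_mem _ (Ideal.mul_mem_mul h01 h10) (Ideal.mul_mem_mul h00 h11)
end

section
/- Let α be a Gaussian integer with N(α) > 11, and let γ be an element of Γ(α), the kernel of the homomorphism SL₂(ℤ[i]) → SL₂(ℤ[i]/⟨α⟩) induced by the quotient map. If tr(γ) ≠ 2, then the complex absolute value of tr(γ) is strictly greater than 9. -/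
open GaussianInt

/-- If `N(α) > 11` and `γ ∈ Γ(α)` has `tr γ ≠ 2`, then `|tr γ| > 9`. -/
theorem stmt_2 (α : GaussianInt) (hα : 11 < α.norm)
    (γ : Matrix.SpecialLinearGroup (Fin 2) GaussianInt)
    (hγ : γ ∈ (Matrix.SpecialLinearGroup.map
      (Ideal.Quotient.mk (Ideal.span {α}))).ker)
    (htr : Matrix.trace (γ : Matrix (Fin 2) (Fin 2) GaussianInt) ≠ 2) :
    9 < ‖toComplex
      (Matrix.trace (γ : Matrix (Fin 2) (Fin 2) GaussianInt))‖ := by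
  have hαne : α ≠ 0 := by
    intro h; rw [h] at hα; simp [Zsqrtd.norm] at hα
  rw [MonoidHom.mem_ker] at hγ
  have hmat : ((Matrix.SpecialLinearGroup.map
      (Ideal.Quotient.mk (Ideal.span {α})) γ : Matrix.SpecialLinearGroup (Fin 2) _) :
      Matrix (Fin 2) (Fin 2) (GaussianInt ⧸ Ideal.span {α})) = 1 := by
    rw [hγ]; rfl
  have hdvd : ∀ i j : Fin 2, α ∣ (γ : Matrix (Fin 2) (Fin 2) GaussianInt) i j
      - (1 : Matrix (Fin 2) (Fin 2) GaussianInt) i j := by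
    intro i j
    rw [← Ideal.mem_span_singleton, ← Ideal.Quotient.eq_zero_iff_mem, map_sub]
    have := congrFun (congrFun hmat i) j
    simp only [Matrix.SpecialLinearGroup.map_apply_coe, RingHom.mapMatrix_apply,
      Matrix.map_apply] at this
    rw [this]
    fin_cases i <;> fin_cases j <;> simp [Matrix.one_apply]
  obtain ⟨a, ha⟩ := hdvd 0 0
  obtain ⟨b, hb⟩ := hdvd 0 1
  obtain ⟨c, hc⟩ := hdvd 1 0
  obtain ⟨d, hd⟩ := hdvd 1 1
  set M := (γ : Matrix (Fin 2) (Fin 2) GaussianInt) with hM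
  have e00 : M 0 0 = 1 + α * a := by have := ha; simp [Matrix.one_apply] at this; linear_combination this
  have e01 : M 0 1 = α * b := by have := hb; simp [Matrix.one_apply] at this; linear_combination this
  have e10 : M 1 0 = α * c := by have := hc; simp [Matrix.one_apply] at this; linear_combination this
  have e11 : M 1 1 = 1 + α * d := by have := hd; simp [Matrix.one_apply] at this; linear_combination this
  have hdet : M.det = 1 := γ.prop
  rw [Matrix.det_fin_two, e00, e01, e10, e11] at hdet
  -- 1 + α(a+d) + α²(ad - bc) = 1
  have key : α * ((a + d) + α * (a * d - b * c)) = 0 := by ring_nf; linear_combination hdet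
  have key2 : a + d = -α * (a * d - b * c) := by
    have := mul_eq_zero.mp key
    rcases this with h | h
    · exact absurd h hαne
    · linear_combination h
  have htr2 : Matrix.trace M - 2 = -(α * α) * (a * d - b * c) := by
    rw [Matrix.trace_fin_two, e00, e11]
    linear_combination α * key2
  have hne : a * d - b * c ≠ 0 := by
    intro h
    apply htr
    rw [h, mul_zero] at htr2
    linear_combination htr2
  -- norm bound
  have hnormtr : (144 : ℤ) ≤ (Matrix.trace M - 2).norm := by
    rw [htr2]
    rw [Zsqrtd.norm_mul, Zsqrtd.norm_neg, Zsqrtd.norm_mul]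
    have h1 : (12 : ℤ) ≤ α.norm := hα
    have h2 : (1 : ℤ) ≤ (a * d - b * c).norm := norm_pos.mpr hne
    nlinarith [norm_nonneg α]
  -- pass to ℝ
  have habs : (12 : ℝ) ≤ ‖toComplex (Matrix.trace M - 2)‖ := by
    have : (144 : ℝ) ≤ Complex.normSq (toComplex (Matrix.trace M - 2)) := by
      rw [← intCast_real_norm]; exact_mod_cast hnormtr
    have h2 := Complex.sq_norm (toComplex (Matrix.trace M - 2))
    nlinarith [norm_nonneg (toComplex (Matrix.trace M - 2))]
  have h2 : ‖toComplex (Matrix.trace M - 2)‖ ≤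
      ‖toComplex (Matrix.trace M)‖ + 2 := by
    rw [map_sub]
    calc ‖toComplex (Matrix.trace M) - toComplex 2‖
        ≤ ‖toComplex (Matrix.trace M)‖ + ‖toComplex 2‖ :=
          norm_sub_le _ _
      _ = ‖toComplex (Matrix.trace M)‖ + 2 := by rw [map_ofNat]; norm_num
  linarith
end

section
/- Let α be a Gaussian integer with N(α) > 11. Then no element γ of Γ(α), the kernel of the homomorphism SL₂(ℤ[i]) → SL₂(ℤ[i]/⟨α⟩) induced by the quotient map, satisfies tr(γ) = −2. -/
open GaussianInt

/-- If `N(α) > 11`, no `γ ∈ Γ(α)` has `tr γ = -2`. -/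
theorem stmt_3 (α : GaussianInt) (hα : 11 < α.norm)
    (γ : Matrix.SpecialLinearGroup (Fin 2) GaussianInt)
    (hγ : γ ∈ (Matrix.SpecialLinearGroup.map
      (Ideal.Quotient.mk (Ideal.span {α}))).ker) :
    Matrix.trace (γ : Matrix (Fin 2) (Fin 2) GaussianInt) ≠ -2 := by
  intro htr
  rw [MonoidHom.mem_ker] at hγ
  replace hγ := Subtype.ext_iff.mp hγ
  set f := Ideal.Quotient.mk (Ideal.span {α})
  have hentry : ∀ i j, f ((γ : Matrix (Fin 2) (Fin 2) GaussianInt) i j)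
      = (1 : Matrix (Fin 2) (Fin 2) (GaussianInt ⧸ Ideal.span {α})) i j := by
    intro i j
    have := congrFun (congrFun hγ i) j
    exact this
  have hdvd : ∀ i j, α ∣ ((γ : Matrix (Fin 2) (Fin 2) GaussianInt) i j
      - (1 : Matrix (Fin 2) (Fin 2) GaussianInt) i j) := by
    intro i j
    rw [← Ideal.mem_span_singleton, ← Ideal.Quotient.eq_zero_iff_mem]
    have := hentry i j
    fin_cases i <;> fin_cases j <;>
      simp_all [f, Matrix.one_apply, map_sub]
  obtain ⟨x, hx⟩ := hdvd 0 0
  obtain ⟨p, hp⟩ := hdvd 0 1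
  obtain ⟨q, hq⟩ := hdvd 1 0
  obtain ⟨y, hy⟩ := hdvd 1 1
  simp [Matrix.one_apply] at hx hp hq hy
  have hdet : (γ : Matrix (Fin 2) (Fin 2) GaussianInt) 0 0 *
      (γ : Matrix (Fin 2) (Fin 2) GaussianInt) 1 1 -
      (γ : Matrix (Fin 2) (Fin 2) GaussianInt) 0 1 *
      (γ : Matrix (Fin 2) (Fin 2) GaussianInt) 1 0 = 1 := by
    have := γ.2
    rwa [Matrix.det_fin_two] at this
  rw [Matrix.trace_fin_two] at htr
  have ha : (γ : Matrix (Fin 2) (Fin 2) GaussianInt) 0 0 = α * x + 1 := by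
    linear_combination hx
  have hd : (γ : Matrix (Fin 2) (Fin 2) GaussianInt) 1 1 = α * y + 1 := by
    linear_combination hy
  rw [ha, hd, hp, hq] at hdet
  rw [ha, hd] at htr
  have key : α ^ 2 * (x * y - p * q) = 4 := by
    linear_combination hdet - htr
  have hnormdvd : (α ^ 2).norm ∣ (4 : GaussianInt).norm :=
    ⟨(x * y - p * q).norm, by rw [← Zsqrtd.norm_mul, key]⟩
  have h16 : (4 : GaussianInt).norm = 16 := by decide
  rw [h16] at hnormdvd
  have h2 : (α ^ 2).norm = α.norm ^ 2 := by
    rw [pow_two, pow_two, Zsqrtd.norm_mul]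
  rw [h2] at hnormdvd
  have hle : α.norm ^ 2 ≤ 16 := Int.le_of_dvd (by norm_num) hnormdvd
  nlinarith
end

section
/- Let γ be an element of Γ(3+2i), the kernel of the homomorphism SL₂(ℤ[i]) → SL₂(ℤ[i]/⟨3+2i⟩) induced by the quotient map. If tr(γ) ≠ 2, then the complex absolute value of tr(γ) is at least 11. -/
open GaussianInt

lemma one_le_abs_toComplex (k : GaussianInt) (hk : k ≠ 0) :
    1 ≤ ‖toComplex k‖ := by
  have h1 : (1 : ℤ) ≤ k.norm := by
    have h0 : 0 ≤ k.norm := Zsqrtd.norm_nonneg (by norm_num) k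
    have hne : k.norm ≠ 0 := fun h => hk ((Zsqrtd.norm_eq_zero_iff (by norm_num) k).1 h)
    omega
  have h2 : (1 : ℝ) ≤ Complex.normSq (toComplex k) := by
    rw [← intCast_real_norm]; exact_mod_cast h1
  nlinarith [Complex.sq_norm (toComplex k), norm_nonneg (toComplex k)]

/-- If `γ ∈ Γ(3+2i)` has `tr γ ≠ 2`, then `|tr γ| ≥ 11`. -/
theorem stmt_4 (γ : Matrix.SpecialLinearGroup (Fin 2) GaussianInt)
    (hγ : γ ∈ (Matrix.SpecialLinearGroup.map
      (Ideal.Quotient.mk (Ideal.span {(⟨3, 2⟩ : GaussianInt)}))).ker)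
    (htr : Matrix.trace (γ : Matrix (Fin 2) (Fin 2) GaussianInt) ≠ 2) :
    11 ≤ ‖(toComplex
      (Matrix.trace (γ : Matrix (Fin 2) (Fin 2) GaussianInt)))‖ := by
  set p : GaussianInt := ⟨3, 2⟩ with hp
  have hker : Matrix.SpecialLinearGroup.map (Ideal.Quotient.mk (Ideal.span {p})) γ = 1 := hγ
  have hmat : ∀ i j, (Ideal.Quotient.mk (Ideal.span {p})) ((γ : Matrix (Fin 2) (Fin 2) GaussianInt) i j)
      = (Ideal.Quotient.mk (Ideal.span {p})) ((1 : Matrix (Fin 2) (Fin 2) GaussianInt) i j) := by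
    intro i j
    have h2 := Subtype.ext_iff.1 hker
    have h3 := congrFun (congrFun h2 i) j
    simp only [Matrix.SpecialLinearGroup.map_apply_coe, RingHom.mapMatrix_apply,
      Matrix.map_apply, Matrix.SpecialLinearGroup.coe_one] at h3
    rw [h3, Matrix.one_apply, Matrix.one_apply]
    split <;> simp
  have hdvd : ∀ i j, p ∣ ((γ : Matrix (Fin 2) (Fin 2) GaussianInt) i j
      - (1 : Matrix (Fin 2) (Fin 2) GaussianInt) i j) := by
    intro i j
    have := (Ideal.Quotient.eq).1 (hmat i j)
    rwa [Ideal.mem_span_singleton] at this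
  obtain ⟨a, ha⟩ := hdvd 0 0
  obtain ⟨b, hb⟩ := hdvd 0 1
  obtain ⟨c, hc⟩ := hdvd 1 0
  obtain ⟨d, hd⟩ := hdvd 1 1
  set g : Matrix (Fin 2) (Fin 2) GaussianInt := (γ : Matrix (Fin 2) (Fin 2) GaussianInt) with hg
  have h00 : g 0 0 = 1 + p * a := by have := ha; simp [Matrix.one_apply] at this; linear_combination this
  have h01 : g 0 1 = p * b := by have := hb; simp [Matrix.one_apply] at this; linear_combination this
  have h10 : g 1 0 = p * c := by have := hc; simp [Matrix.one_apply] at this; linear_combination this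
  have h11 : g 1 1 = 1 + p * d := by have := hd; simp [Matrix.one_apply] at this; linear_combination this
  have hdet : g.det = 1 := γ.2
  rw [Matrix.det_fin_two, h00, h01, h10, h11] at hdet
  have hp0 : p ≠ 0 := by
    intro h; rw [hp] at h
    have := congrArg Zsqrtd.re h; simp at this
  have hsum : a + d = -p * (a * d - b * c) := by
    have h2 : p * (a + d + p * (a * d - b * c)) = 0 := by ring_nf; linear_combination hdet
    rcases mul_eq_zero.1 h2 with h | h
    · exact absurd h hp0
    · linear_combination h
  have htr2 : Matrix.trace g = 2 - p * p * (a * d - b * c) := by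
    rw [Matrix.trace_fin_two, h00, h11]
    linear_combination p * hsum
  set k : GaussianInt := a * d - b * c with hk
  have hk0 : k ≠ 0 := by
    intro h
    apply htr
    rw [htr2, h]; ring
  have habs : ‖toComplex (p * p * k)‖ = 13 * ‖toComplex k‖ := by
    rw [map_mul, map_mul, norm_mul, norm_mul]
    have : ‖toComplex p‖ = Real.sqrt 13 := by
      rw [Complex.norm_def, ← intCast_real_norm]
      norm_num [hp, Zsqrtd.norm]
    rw [this, show Real.sqrt 13 * Real.sqrt 13 = 13 from Real.mul_self_sqrt (by norm_num)]
  have h13 : 13 ≤ ‖toComplex (p * p * k)‖ := by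
    rw [habs]
    nlinarith [one_le_abs_toComplex k hk0]
  have hsub : toComplex (Matrix.trace g) + (-2) = -(toComplex (p * p * k)) := by
    have heq : Matrix.trace g - 2 = -(p * p * k) := by rw [htr2]; ring
    calc toComplex (Matrix.trace g) + (-2) = toComplex (Matrix.trace g - 2) := by
          rw [map_sub, map_ofNat]; ring
      _ = -(toComplex (p * p * k)) := by rw [heq, map_neg]
  have hle := norm_add_le (toComplex (Matrix.trace g)) (-2)
  rw [hsub, norm_neg] at hle
  have h2 : ‖(-2 : ℂ)‖ = 2 := by simp
  rw [h2] at hle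
  linarith
end

section
/- Let α be a Gaussian integer with N(α) > 11, let γ be an element of Γ(α), the kernel of the homomorphism SL₂(ℤ[i]) → SL₂(ℤ[i]/⟨α⟩) induced by the quotient map, with tr(γ) ≠ 2, and let w be a complex number such that 2·cosh(w/2) equals the image of tr(γ) in ℂ. Then |Re w| > 2·arccosh(9/2). -/
open GaussianInt

/-- The real inverse hyperbolic cosine, `arccosh x = log (x + √(x² - 1))`. -/
noncomputable def arccosh (x : ℝ) : ℝ := Real.log (x + Real.sqrt (x ^ 2 - 1))

lemma cosh_arccosh_nine_halves : Real.cosh (arccosh (9 / 2)) = 9 / 2 := by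
  have hs : Real.sqrt ((9 / 2 : ℝ) ^ 2 - 1) ^ 2 = (9 / 2 : ℝ) ^ 2 - 1 :=
    Real.sq_sqrt (by norm_num)
  have hs0 : (0 : ℝ) ≤ Real.sqrt ((9 / 2 : ℝ) ^ 2 - 1) := Real.sqrt_nonneg _
  set x : ℝ := 9 / 2 + Real.sqrt ((9 / 2 : ℝ) ^ 2 - 1) with hx
  have hxpos : 0 < x := by positivity
  rw [arccosh, ← hx, Real.cosh_log hxpos]
  have h9 : x + x⁻¹ = 9 := by
    have h1 : x * x + 1 = 9 * x := by
      have : x * x = x ^ 2 := by ring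
      rw [this, hx]
      nlinarith [hs]
    have hx0 : x ≠ 0 := ne_of_gt hxpos
    field_simp
    nlinarith [h1]
  rw [h9]

lemma arccosh_nine_halves_nonneg : 0 ≤ arccosh (9 / 2) := by
  apply Real.log_nonneg
  have := Real.sqrt_nonneg ((9 / 2 : ℝ) ^ 2 - 1)
  linarith

lemma abs_cosh_le (u : ℂ) : ‖Complex.cosh u‖ ≤ Real.cosh u.re := by
  rw [Complex.cosh, Real.cosh_eq]
  calc ‖(Complex.exp u + Complex.exp (-u)) / 2‖
      ≤ (‖Complex.exp u‖ + ‖Complex.exp (-u)‖) / 2 := by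
        rw [Complex.norm_div]
        rw [show ‖(2:ℂ)‖ = 2 by norm_num]
        gcongr
        exact norm_add_le _ _
    _ = (Real.exp u.re + Real.exp (-u.re)) / 2 := by
        rw [Complex.norm_exp, Complex.norm_exp, Complex.neg_re]

/-- If `N(α) > 11`, `γ ∈ Γ(α)` with `tr γ ≠ 2`, and
`2·cosh(w/2) = tr γ` in `ℂ`, then `|Re w| > 2·arccosh(9/2)`. -/
theorem stmt_8 (α : GaussianInt) (hα : 11 < α.norm)
    (γ : Matrix.SpecialLinearGroup (Fin 2) GaussianInt)
    (hγ : γ ∈ (Matrix.SpecialLinearGroup.map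
      (Ideal.Quotient.mk (Ideal.span {α}))).ker)
    (htr : Matrix.trace (γ : Matrix (Fin 2) (Fin 2) GaussianInt) ≠ 2)
    (w : ℂ)
    (hw : 2 * Complex.cosh (w / 2)
      = toComplex (Matrix.trace (γ : Matrix (Fin 2) (Fin 2) GaussianInt))) :
    2 * arccosh (9 / 2) < |w.re| := by
  set f := Ideal.Quotient.mk (Ideal.span {α}) with hf
  have h1 : ((Matrix.SpecialLinearGroup.map f γ :
        Matrix.SpecialLinearGroup (Fin 2) (GaussianInt ⧸ Ideal.span {α})) :
        Matrix (Fin 2) (Fin 2) (GaussianInt ⧸ Ideal.span {α}))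
      = (1 : Matrix (Fin 2) (Fin 2) (GaussianInt ⧸ Ideal.span {α})) := by
    rw [MonoidHom.mem_ker.mp hγ]; simp
  have hent : ∀ i j, f ((γ : Matrix (Fin 2) (Fin 2) GaussianInt) i j)
      = (1 : Matrix (Fin 2) (Fin 2) (GaussianInt ⧸ Ideal.span {α})) i j := by
    intro i j
    have := congrFun (congrFun h1 i) j
    simpa using this
  have hdvd : ∀ i j, α ∣ ((γ : Matrix (Fin 2) (Fin 2) GaussianInt) i j
      - (1 : Matrix (Fin 2) (Fin 2) GaussianInt) i j) := by
    intro i j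
    rw [← Ideal.mem_span_singleton, ← Ideal.Quotient.eq_zero_iff_mem]
    have : f ((1 : Matrix (Fin 2) (Fin 2) GaussianInt) i j)
        = (1 : Matrix (Fin 2) (Fin 2) (GaussianInt ⧸ Ideal.span {α})) i j := by
      by_cases h : i = j <;> simp [Matrix.one_apply, h]
    rw [map_sub, hent i j, this, sub_self]
  set M : Matrix (Fin 2) (Fin 2) GaussianInt := (γ : Matrix (Fin 2) (Fin 2) GaussianInt)
  have ha := hdvd 0 0
  have hb := hdvd 0 1
  have hc := hdvd 1 0
  have hd := hdvd 1 1
  simp only [Matrix.one_apply_eq, Matrix.one_apply_ne (by decide : (0 : Fin 2) ≠ 1),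
    Matrix.one_apply_ne (by decide : (1 : Fin 2) ≠ 0), sub_zero] at ha hb hc hd
  have hdet : M 0 0 * M 1 1 - M 0 1 * M 1 0 = 1 := by
    have := γ.2
    rwa [Matrix.det_fin_two] at this
  set t : GaussianInt := Matrix.trace M with ht
  have htrace : t = M 0 0 + M 1 1 := by
    simp [ht, Matrix.trace_fin_two]
  -- α² divides t - 2
  have hkey : α ^ 2 ∣ t - 2 := by
    have heq : t - 2 = M 0 1 * M 1 0 - (M 0 0 - 1) * (M 1 1 - 1) := by
      rw [htrace]; linear_combination hdet
    rw [heq]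
    rw [sq]
    exact dvd_sub (mul_dvd_mul hb hc) (mul_dvd_mul ha hd)
  have htne : t - 2 ≠ 0 := sub_ne_zero.mpr htr
  -- norm bound
  have hnorm : (144 : ℤ) ≤ (t - 2).norm := by
    obtain ⟨k, hk⟩ := hkey
    have hk0 : k ≠ 0 := by
      rintro rfl; rw [mul_zero] at hk; exact htne hk
    have hknorm : 1 ≤ k.norm := GaussianInt.norm_pos.mpr hk0
    have hα12 : 12 ≤ α.norm := hα
    have : (t - 2).norm = α.norm * α.norm * k.norm := by
      rw [hk, Zsqrtd.norm_mul, sq, Zsqrtd.norm_mul]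
    rw [this]
    nlinarith [GaussianInt.norm_nonneg α]
  -- complex absolute value bound
  set z : ℂ := toComplex t with hz
  have habs2 : (12 : ℝ) ≤ ‖z - 2‖ := by
    have he : z - 2 = toComplex (t - 2) := by
      rw [hz, map_sub, map_ofNat]
    have h1 : Complex.normSq (z - 2) = ((t - 2).norm : ℝ) := by
      rw [he, ← GaussianInt.intCast_real_norm]
    have h2 : (144 : ℝ) ≤ Complex.normSq (z - 2) := by
      rw [h1]; exact_mod_cast hnorm
    have h3 : ‖z - 2‖ ^ 2 = Complex.normSq (z - 2) := Complex.sq_norm _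
    nlinarith [norm_nonneg (z - 2)]
  have habs : (10 : ℝ) ≤ ‖z‖ := by
    have h3 := norm_sub_le z (2 : ℂ)
    have h2 : ‖(2 : ℂ)‖ = 2 := by norm_num
    linarith
  -- cosh bound
  have hcosh5 : (5 : ℝ) ≤ Real.cosh (w.re / 2) := by
    have h3 : 2 * ‖Complex.cosh (w / 2)‖ = ‖z‖ := by
      rw [← hw, norm_mul]; norm_num
    have h4 := abs_cosh_le (w / 2)
    have h5 : (w / 2).re = w.re / 2 := by
      simp [Complex.div_ofNat_re]
    rw [h5] at h4
    linarith
  -- conclude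
  have hmono : Real.cosh (arccosh (9 / 2)) < Real.cosh (|w.re| / 2) := by
    rw [cosh_arccosh_nine_halves]
    have : Real.cosh (|w.re| / 2) = Real.cosh (w.re / 2) := by
      rw [← Real.cosh_abs (w.re / 2), abs_div]
      norm_num
    rw [this]; linarith
  rw [Real.cosh_lt_cosh] at hmono
  rw [abs_of_nonneg arccosh_nine_halves_nonneg,
    abs_of_nonneg (by positivity : (0:ℝ) ≤ |w.re| / 2)] at hmono
  linarith
end
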